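/- For every m ∈ ℕ, the F-trajectory of 2m + 3/2 diverges monotonically to +∞: the sequence (F^k(2m + 3/2))_{k≥0} is strictly increasing and tends to +∞. -/
import Mathlib


/-- The extension of the original Collatz function:
`Fx = x/2` if `⌊x⌋` is even, `3x+1` if `⌊x⌋` is odd. -/
noncomputable def F (x : ℝ) : ℝ := if Even ⌊x⌋ then x / 2 else 3 * x + 1

lemma F_key (m : ℕ) : ∀ k : ℕ, F^[k] (2 * m + 3 / 2) = 2 * 3 ^ k * (m + 1) - 1 / 2 := by
  intro k
  induction k with
  | zero => simp; ring
  | succ k ih =>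
    rw [Function.iterate_succ_apply', ih]
    have hcast : (2 * 3 ^ k * ((m : ℝ) + 1) - 1 / 2)
        = ((2 * 3 ^ k * ((m : ℤ) + 1) - 1 : ℤ) : ℝ) + 1 / 2 := by
      push_cast; ring
    have hfloor : ⌊(2 * 3 ^ k * ((m : ℝ) + 1) - 1 / 2)⌋
        = 2 * 3 ^ k * ((m : ℤ) + 1) - 1 := by
      rw [hcast, Int.floor_intCast_add]
      norm_num
    have hodd : ¬ Even (⌊(2 * 3 ^ k * ((m : ℝ) + 1) - 1 / 2)⌋) := by
      rw [hfloor, Int.not_even_iff_odd]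
      exact ⟨3 ^ k * ((m : ℤ) + 1) - 1, by ring⟩
    rw [F, if_neg hodd]
    ring

/-- For every `m ∈ ℕ`, the `F`-trajectory of `2m + 3/2` is strictly increasing and
diverges to `+∞`. -/
theorem F_trajectory_diverges (m : ℕ) :
    StrictMono (fun k : ℕ => F^[k] (2 * m + 3 / 2)) ∧
    Filter.Tendsto (fun k : ℕ => F^[k] (2 * m + 3 / 2)) Filter.atTop Filter.atTop := by
  have hm : (1 : ℝ) ≤ (m : ℝ) + 1 := by linarith [Nat.cast_nonneg (α := ℝ) m]
  constructor
  · intro a b hab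
    simp only [F_key m]
    have h3 : (3 : ℝ) ^ a < 3 ^ b := pow_lt_pow_right₀ (by norm_num) hab
    nlinarith [pow_pos (by norm_num : (0:ℝ) < 3) a]
  · have hpow : Filter.Tendsto (fun k : ℕ => (3 : ℝ) ^ k) Filter.atTop Filter.atTop :=
      tendsto_pow_atTop_atTop_of_one_lt (by norm_num)
    have : Filter.Tendsto (fun k : ℕ => 2 * (3:ℝ) ^ k * (m + 1) - 1 / 2)
        Filter.atTop Filter.atTop := by
      refine Filter.tendsto_atTop_mono (fun k => ?_) hpow
      have h1 : (1:ℝ) ≤ 3 ^ k := one_le_pow₀ (by norm_num)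
      nlinarith
    simpa only [F_key m] using this
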